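/- arXiv:1401.4856 — 9 statements merged into one kernel-verified Lean document; each statement's English description precedes it below -/
import Mathlib

section
/- If g : K → (−∞, +∞] is K-inf-compact, then the function x ↦ inf_{a ∈ A(x)} g(x,a) is lower semicontinuous on S. -/
open Filter Topology

/-- `f` is `K`-inf-compact on the graph `K = {(x,a) : x ∈ S, a ∈ A(x)}` of the
multifunction `As`. -/
def KInfCompact {S A : Type*} [MetricSpace S] [MetricSpace A]
    (As : S → Set A) (f : S × A → EReal) : Prop :=
  LowerSemicontinuousOn f {p : S × A | p.2 ∈ As p.1} ∧
    ∀ (xs : ℕ → S) (as : ℕ → A) (x : S),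
      Tendsto xs atTop (𝓝 x) → (∀ n, as n ∈ As (xs n)) →
      (∃ M : ℝ, ∀ n, f (xs n, as n) ≤ (M : EReal)) →
      ∃ a ∈ As x, ∃ φ : ℕ → ℕ, StrictMono φ ∧ Tendsto (as ∘ φ) atTop (𝓝 a)

/-- If `g : K → (−∞, +∞]` is `K`-inf-compact, then `x ↦ inf_{a ∈ A(x)} g (x,a)` is
lower semicontinuous on `S`. -/
theorem stmt2 {S A : Type*} [MetricSpace S] [MetricSpace A] (As : S → Set A)
    (hAs : ∀ x, (As x).Nonempty)
    (g : S × A → EReal)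
    (hgbot : ∀ p : S × A, p.2 ∈ As p.1 → g p ≠ ⊥)
    (hg : KInfCompact As g) :
    LowerSemicontinuous (fun x => ⨅ a ∈ As x, g (x, a)) := by
  intro x y hy
  by_contra hcon
  rw [Filter.not_eventually] at hcon
  simp only [not_lt] at hcon
  obtain ⟨xs, hxs, hxsle⟩ := exists_seq_forall_of_frequently hcon
  -- pick a rational M with y < M < inf
  obtain ⟨q, hyq, hqf⟩ := EReal.exists_rat_btwn_of_lt hy
  set M : ℝ := (q : ℝ) with hM
  -- pick a_n with g (xs n, a_n) < M
  have hlt : ∀ n, ∃ a ∈ As (xs n), g (xs n, a) < (M : EReal) := by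
    intro n
    have h1 : (⨅ a ∈ As (xs n), g (xs n, a)) < (M : EReal) :=
      lt_of_le_of_lt (hxsle n) (by exact_mod_cast hyq)
    obtain ⟨a, ha⟩ := iInf_lt_iff.mp h1
    obtain ⟨hmem, hlt⟩ := iInf_lt_iff.mp ha
    exact ⟨a, hmem, hlt⟩
  choose as hasmem haslt using hlt
  obtain ⟨a, haA, φ, hφ, hconv⟩ :=
    hg.2 xs as x hxs hasmem ⟨M, fun n => (haslt n).le⟩
  -- the pairs converge to (x, a) within the graph
  have hpair : Tendsto (fun n => (xs (φ n), as (φ n))) atTop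
      (𝓝[{p : S × A | p.2 ∈ As p.1}] (x, a)) := by
    apply tendsto_nhdsWithin_of_tendsto_nhds_of_eventually_within
    · exact (hxs.comp hφ.tendsto_atTop).prodMk_nhds hconv
    · exact Eventually.of_forall fun n => hasmem (φ n)
  -- g (x, a) ≤ M
  have hgle : g (x, a) ≤ (M : EReal) := by
    by_contra hgt
    push_neg at hgt
    have := (hg.1 (x, a) haA (M : EReal) hgt)
    have h2 := (hpair.eventually this)
    obtain ⟨n, hn⟩ := h2.exists
    exact absurd (haslt (φ n)) (not_lt.mpr hn.le)
  -- contradiction: inf ≤ g (x, a) ≤ M < inf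
  have hinf : (⨅ b ∈ As x, g (x, b)) ≤ g (x, a) := biInf_le _ haA
  have : (⨅ b ∈ As x, g (x, b)) < (⨅ b ∈ As x, g (x, b)) :=
    lt_of_le_of_lt (hinf.trans hgle) (by exact_mod_cast hqf)
  exact lt_irrefl _ this
end

section
/- Let (S, ρ) be a metric space and suppose a sequence (Q_n) of Borel probability measures on S converges weakly to a Borel probability measure Q. Let g_n : S → [0, +∞] be Borel measurable for every n, and define g(y) := liminf_{n→∞, x→y} g_n(x) for y ∈ S (this function g is lower semicontinuous, hence Borel measurable). Then ∫_S g dQ ≤ liminf_{n→∞} ∫_S g_n dQ_n, where all integrals are Lebesgue integrals with values in [0, +∞]. -/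
open Filter Topology MeasureTheory ENNReal Set

lemma ennreal_iSup_min_nat (a : ℝ≥0∞) : (⨆ M : ℕ, min a (M : ℝ≥0∞)) = a := by
  apply le_antisymm (iSup_le fun M => min_le_left _ _)
  rcases eq_or_ne a ⊤ with rfl | ha
  · have : (⨆ M : ℕ, min (⊤ : ℝ≥0∞) (M : ℝ≥0∞)) = ⨆ M : ℕ, (M : ℝ≥0∞) := by
      simp
    rw [this, ENNReal.iSup_natCast]
  · obtain ⟨M, hM⟩ := ENNReal.exists_nat_gt ha
    calc a = min a M := (min_eq_left hM.le).symm
    _ ≤ ⨆ M : ℕ, min a (M : ℝ≥0∞) := le_iSup (fun M : ℕ => min a (M : ℝ≥0∞)) M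

/-- Portmanteau-style Fatou for ℝ≥0∞-valued functions with open superlevel sets. -/
lemma lsc_lintegral_le_liminf {S : Type*} [MetricSpace S] [MeasurableSpace S] [BorelSpace S]
    (μ : Measure S) (μs : ℕ → Measure S) (f : S → ℝ≥0∞)
    (hfo : ∀ t : ℝ≥0∞, IsOpen {x | t < f x})
    (h_opens : ∀ G, IsOpen G → μ G ≤ atTop.liminf (fun i => μs i G)) :
    ∫⁻ x, f x ∂μ ≤ atTop.liminf (fun i => ∫⁻ x, f x ∂(μs i)) := by
  have hf : Measurable f := by
    apply LowerSemicontinuous.measurable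
    rw [lowerSemicontinuous_iff_isOpen_preimage]
    intro t
    exact hfo t
  -- truncation
  have key : ∀ M : ℕ, ∫⁻ x, min (f x) M ∂μ ≤ atTop.liminf (fun i => ∫⁻ x, f x ∂(μs i)) := by
    intro M
    set fM : S → ℝ := fun x => (min (f x) M).toReal with hfM
    have hne : ∀ x, min (f x) (M : ℝ≥0∞) ≠ ⊤ := fun x =>
      ne_top_of_le_ne_top (natCast_ne_top M) (min_le_right _ _)
    have hofReal : ∀ x, ENNReal.ofReal (fM x) = min (f x) M := fun x =>
      ENNReal.ofReal_toReal (hne x)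
    have fM_nn : 0 ≤ fM := fun x => ENNReal.toReal_nonneg
    have fM_mble : Measurable fM := (hf.min measurable_const).ennreal_toReal
    have fM_open : ∀ t : ℝ, IsOpen {a : S | t < fM a} := by
      intro t
      rcases lt_or_ge t 0 with ht | ht
      · have : {a : S | t < fM a} = Set.univ := by
          ext a; simp [lt_of_lt_of_le ht (fM_nn a)]
        rw [this]; exact isOpen_univ
      · have : {a : S | t < fM a} = {a : S | ENNReal.ofReal t < f a} ∩
            {a : S | ENNReal.ofReal t < (M : ℝ≥0∞)} := by
          ext a
          simp only [Set.mem_setOf_eq, Set.mem_inter_iff, hfM]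
          rw [← ENNReal.ofReal_lt_iff_lt_toReal ht (hne a), lt_min_iff]
        rw [this]
        have h2 : IsOpen {a : S | ENNReal.ofReal t < (M : ℝ≥0∞)} := by
          by_cases h : ENNReal.ofReal t < (M : ℝ≥0∞) <;> simp [h]
        exact (hfo _).inter h2
    have lhs : ∫⁻ x, min (f x) M ∂μ = ∫⁻ t in Ioi 0, μ {a : S | t < fM a} := by
      rw [← lintegral_congr fun x => (hofReal x)]
      exact lintegral_eq_lintegral_meas_lt μ (Eventually.of_forall fM_nn) fM_mble.aemeasurable
    rw [lhs]
    calc ∫⁻ t in Ioi 0, μ {a : S | t < fM a}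
        ≤ ∫⁻ t in Ioi 0, atTop.liminf (fun i => μs i {a : S | t < fM a}) :=
          lintegral_mono fun t => h_opens _ (fM_open t)
      _ ≤ atTop.liminf (fun i => ∫⁻ t in Ioi 0, μs i {a : S | t < fM a}) :=
          lintegral_liminf_le fun i => Antitone.measurable fun s t hst =>
            measure_mono fun ω hω => lt_of_le_of_lt hst hω
      _ ≤ atTop.liminf (fun i => ∫⁻ x, f x ∂(μs i)) := by
          apply liminf_le_liminf (u := fun i => ∫⁻ t in Ioi 0, μs i {a : S | t < fM a})
            ?_ (by isBoundedDefault) (by isBoundedDefault)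
          apply Eventually.of_forall
          intro i
          rw [← lintegral_eq_lintegral_meas_lt (μs i) (Eventually.of_forall fM_nn)
            fM_mble.aemeasurable, lintegral_congr fun x => hofReal x]
          exact lintegral_mono fun x => min_le_left _ _
  have mono : Monotone fun (M : ℕ) (x : S) => min (f x) (M : ℝ≥0∞) := fun M M' hMM' x =>
    min_le_min le_rfl (by exact_mod_cast Nat.cast_le.mpr hMM')
  calc ∫⁻ x, f x ∂μ = ∫⁻ x, ⨆ M : ℕ, min (f x) M ∂μ := by
        apply lintegral_congr; intro x; rw [ennreal_iSup_min_nat]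
    _ = ⨆ M : ℕ, ∫⁻ x, min (f x) M ∂μ :=
        lintegral_iSup (fun M => hf.min measurable_const) mono
    _ ≤ atTop.liminf (fun i => ∫⁻ x, f x ∂(μs i)) := iSup_le key

/-- Generalized Fatou's lemma: if Borel probability measures `Qₙ` on a metric space `S`
converge weakly to `Q` and `gₙ : S → [0, +∞]` are Borel measurable, then
`∫_S (liminf_{n→∞, x→y} gₙ(x)) Q(dy) ≤ liminf_n ∫_S gₙ dQₙ`, where
`liminf_{n→∞, x→y} gₙ(x) := sup_{N∈ℕ, Δ>0} inf { gₙ(x) : n ≥ N, dist x y < Δ }`. -/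
theorem stmt4 {S : Type*} [MetricSpace S] [MeasurableSpace S] [BorelSpace S]
    (Q : ℕ → Measure S) (Qlim : Measure S)
    (hQ : ∀ n, IsProbabilityMeasure (Q n)) (hQlim : IsProbabilityMeasure Qlim)
    (hweak : ∀ f : BoundedContinuousFunction S ℝ,
      Tendsto (fun n => ∫ x, f x ∂(Q n)) atTop (𝓝 (∫ x, f x ∂Qlim)))
    (g : ℕ → S → ℝ≥0∞) (hg : ∀ n, Measurable (g n)) :
    ∫⁻ y, (⨆ (N : ℕ) (Δ : ℝ) (_ : 0 < Δ),
        ⨅ (n : ℕ) (_ : N ≤ n) (x : S) (_ : dist x y < Δ), g n x) ∂Qlim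
      ≤ liminf (fun n => ∫⁻ x, g n x ∂(Q n)) atTop := by
  -- the truncated relaxed functions
  set G : ℕ → S → ℝ≥0∞ := fun N y => ⨆ (Δ : ℝ) (_ : 0 < Δ),
      ⨅ (n : ℕ) (_ : N ≤ n) (x : S) (_ : dist x y < Δ), g n x with hG
  -- portmanteau: open sets
  have h_opens : ∀ O, IsOpen O → Qlim O ≤ atTop.liminf (fun i => Q i O) := by
    set μ : ProbabilityMeasure S := ⟨Qlim, hQlim⟩
    set μs : ℕ → ProbabilityMeasure S := fun i => ⟨Q i, hQ i⟩
    have htend : Tendsto μs atTop (𝓝 μ) := by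
      rw [ProbabilityMeasure.tendsto_iff_forall_integral_tendsto]
      exact hweak
    intro O hO
    exact ProbabilityMeasure.le_liminf_measure_open_of_tendsto htend hO
  -- superlevel sets of G N are open
  have hGopen : ∀ N (t : ℝ≥0∞), IsOpen {y | t < G N y} := by
    intro N t
    rw [Metric.isOpen_iff]
    intro y hy
    simp only [Set.mem_setOf_eq, hG, lt_iSup_iff] at hy
    obtain ⟨Δ, hΔ, ht⟩ := hy
    refine ⟨Δ / 2, by linarith, fun z hz => ?_⟩
    simp only [Set.mem_setOf_eq, hG, lt_iSup_iff]
    refine ⟨Δ / 2, by linarith, lt_of_lt_of_le ht ?_⟩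
    apply le_iInf₂ fun n hn => le_iInf₂ fun x hx => ?_
    have hxy : dist x y < Δ := by
      calc dist x y ≤ dist x z + dist z y := dist_triangle x z y
      _ < Δ / 2 + Δ / 2 := add_lt_add hx (by rwa [Metric.mem_ball] at hz)
      _ = Δ := by ring
    exact iInf₂_le_of_le n hn (iInf₂_le x hxy)
  have hGmble : ∀ N, Measurable (G N) := fun N => by
    apply LowerSemicontinuous.measurable
    rw [lowerSemicontinuous_iff_isOpen_preimage]
    exact fun t => hGopen N t
  -- G N ≤ g n for n ≥ N
  have hGle : ∀ N n, N ≤ n → ∀ y, G N y ≤ g n y := by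
    intro N n hn y
    apply iSup_le fun Δ => iSup_le fun hΔ => ?_
    exact iInf₂_le_of_le n hn (iInf₂_le_of_le y (by simpa using hΔ) le_rfl)
  -- monotone in N
  have hGmono : Monotone G := by
    intro N M hNM y
    apply iSup_le fun Δ => iSup_le fun hΔ => le_iSup_of_le Δ (le_iSup_of_le hΔ ?_)
    apply le_iInf₂ fun n hn => iInf₂_le n (hNM.trans hn)
  calc ∫⁻ y, (⨆ N, G N y) ∂Qlim = ⨆ N, ∫⁻ y, G N y ∂Qlim :=
        lintegral_iSup hGmble hGmono
    _ ≤ liminf (fun n => ∫⁻ x, g n x ∂(Q n)) atTop := by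
        apply iSup_le fun N => ?_
        calc ∫⁻ y, G N y ∂Qlim ≤ atTop.liminf (fun i => ∫⁻ y, G N y ∂(Q i)) :=
              lsc_lintegral_le_liminf Qlim Q (G N) (hGopen N) h_opens
          _ ≤ liminf (fun n => ∫⁻ x, g n x ∂(Q n)) atTop := by
              apply liminf_le_liminf ?_ (by isBoundedDefault) (by isBoundedDefault)
              filter_upwards [eventually_ge_atTop N] with i hi
              exact lintegral_mono fun y => hGle N i hi y
end

section
/- If u : S → [0, +∞] is Borel measurable and satisfies u(x) = (T̃u)(x) for every x ∈ S, then u(x) = (Tu)(x) for every x ∈ S. -/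
open Filter Topology MeasureTheory ENNReal

/-- If a Borel measurable `u : S → [0, +∞]` satisfies `u = T̃ u` pointwise, where
`(T̃ u)(x) = inf_{a ∈ A(x)} ( c(x,a) + ∫_S u dν(x,a) ) / (α + q_x(a))` with
`q_x(a) := ν(x,a)(S)`, then `u = T u` pointwise, where
`(T u)(x) = inf_{a ∈ A(x)}
    ( c(x,a) + ∫_S u dν(x,a) + (w(x) − q_x(a))·u(x) ) / (α + w(x))`. -/
theorem stmt9 {S A : Type*} [MetricSpace S] [MeasurableSpace S] [BorelSpace S]
    (As : S → Set A) (hAs : ∀ x, (As x).Nonempty)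
    (ν : S → A → Measure S)
    (hν0 : ∀ x, ∀ a ∈ As x, ν x a {x} = 0)
    (w : S → ℝ) (hw : ∀ x, 0 < w x)
    (hνw : ∀ x, ∀ a ∈ As x, ν x a Set.univ ≤ ENNReal.ofReal (w x))
    (α : ℝ) (hα : 0 < α)
    (c : S → A → ℝ) (hc0 : ∀ x, ∀ a ∈ As x, 0 ≤ c x a)
    (u : S → ℝ≥0∞) (hu : Measurable u)
    (hfix : ∀ x : S, u x = ⨅ a ∈ As x,
      (ENNReal.ofReal (c x a) + ∫⁻ y, u y ∂(ν x a))
        / (ENNReal.ofReal α + ν x a Set.univ)) :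
    ∀ x : S, u x = ⨅ a ∈ As x,
      (ENNReal.ofReal (c x a) + ∫⁻ y, u y ∂(ν x a)
          + (ENNReal.ofReal (w x) - ν x a Set.univ) * u x)
        / ENNReal.ofReal (α + w x) := by
  intro x
  set q : A → ℝ≥0∞ := fun a => ν x a Set.univ with hq
  set B : A → ℝ≥0∞ := fun a => ENNReal.ofReal (c x a) + ∫⁻ y, u y ∂(ν x a) with hB
  set r : A → ℝ≥0∞ := fun a => ENNReal.ofReal (w x) - q a with hr
  have hD2 : ENNReal.ofReal (α + w x) ≠ 0 := by
    simp only [ne_eq, ENNReal.ofReal_eq_zero, not_le]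
    linarith [hw x]
  have hD2t : ENNReal.ofReal (α + w x) ≠ ∞ := ENNReal.ofReal_ne_top
  have hD1 : ∀ a ∈ As x, ENNReal.ofReal α + q a ≠ 0 := by
    intro a _
    simp [ENNReal.ofReal_eq_zero, not_le, hα]
  have hD1t : ∀ a ∈ As x, ENNReal.ofReal α + q a ≠ ∞ := by
    intro a ha
    exact ENNReal.add_ne_top.2 ⟨ENNReal.ofReal_ne_top,
      ne_top_of_le_ne_top ENNReal.ofReal_ne_top (hνw x a ha)⟩
  have hsum : ∀ a ∈ As x, ENNReal.ofReal α + q a + r a = ENNReal.ofReal (α + w x) := by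
    intro a ha
    rw [ENNReal.ofReal_add hα.le (hw x).le, add_assoc, hr]
    congr 1
    exact add_tsub_cancel_of_le (hνw x a ha)
  have hu_le : ∀ a ∈ As x, u x ≤ B a / (ENNReal.ofReal α + q a) := by
    intro a ha
    rw [hfix x]
    exact biInf_le _ ha
  apply le_antisymm
  · refine le_iInf₂ fun a ha => ?_
    rw [ENNReal.le_div_iff_mul_le (Or.inl hD2) (Or.inl hD2t)]
    calc u x * ENNReal.ofReal (α + w x)
        = u x * (ENNReal.ofReal α + q a) + u x * r a := by
          rw [← hsum a ha, mul_add]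
      _ ≤ B a + r a * u x := by
          refine add_le_add ?_ (le_of_eq (mul_comm _ _))
          rw [← ENNReal.le_div_iff_mul_le (Or.inl (hD1 a ha)) (Or.inl (hD1t a ha))]
          exact hu_le a ha
  · have : (⨅ a ∈ As x, (B a + r a * u x) / ENNReal.ofReal (α + w x)) ≤
        ⨅ a ∈ As x, B a / (ENNReal.ofReal α + q a) := by
      refine iInf_mono fun a => iInf_mono' fun ha => ⟨ha, ?_⟩
      rw [ENNReal.div_le_iff_le_mul (Or.inl hD2) (Or.inl hD2t)]
      calc B a + r a * u x
          ≤ B a + r a * (B a / (ENNReal.ofReal α + q a)) := by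
            gcongr; exact hu_le a ha
        _ = B a / (ENNReal.ofReal α + q a) * (ENNReal.ofReal α + q a)
            + B a / (ENNReal.ofReal α + q a) * r a := by
            rw [ENNReal.div_mul_cancel (hD1 a ha) (hD1t a ha), mul_comm (r a)]
        _ = B a / (ENNReal.ofReal α + q a) * ENNReal.ofReal (α + w x) := by
            rw [← mul_add, hsum a ha]
    exact this.trans_eq (hfix x).symm
end

section
/- If v : S → [0, +∞] is Borel measurable and satisfies v(x) = (Tv)(x) for every x ∈ S, then v(x) ≥ (T̃v)(x) for every x ∈ S. -/
open Filter Topology MeasureTheory ENNReal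

/-- If a Borel measurable `v : S → [0, +∞]` satisfies `v = T v` pointwise, where
`(T v)(x) = inf_{a ∈ A(x)}
    ( c(x,a) + ∫_S v dν(x,a) + (w(x) − q_x(a))·v(x) ) / (α + w(x))` with
`q_x(a) := ν(x,a)(S)`, then `v ≥ T̃ v` pointwise, where
`(T̃ v)(x) = inf_{a ∈ A(x)} ( c(x,a) + ∫_S v dν(x,a) ) / (α + q_x(a))`. -/
theorem stmt10 {S A : Type*} [MetricSpace S] [MeasurableSpace S] [BorelSpace S]
    (As : S → Set A) (hAs : ∀ x, (As x).Nonempty)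
    (ν : S → A → Measure S)
    (hν0 : ∀ x, ∀ a ∈ As x, ν x a {x} = 0)
    (w : S → ℝ) (hw : ∀ x, 0 < w x)
    (hνw : ∀ x, ∀ a ∈ As x, ν x a Set.univ ≤ ENNReal.ofReal (w x))
    (α : ℝ) (hα : 0 < α)
    (c : S → A → ℝ) (hc0 : ∀ x, ∀ a ∈ As x, 0 ≤ c x a)
    (v : S → ℝ≥0∞) (hv : Measurable v)
    (hfix : ∀ x : S, v x = ⨅ a ∈ As x,
      (ENNReal.ofReal (c x a) + ∫⁻ y, v y ∂(ν x a)
          + (ENNReal.ofReal (w x) - ν x a Set.univ) * v x)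
        / ENNReal.ofReal (α + w x)) :
    ∀ x : S, (⨅ a ∈ As x,
      (ENNReal.ofReal (c x a) + ∫⁻ y, v y ∂(ν x a))
        / (ENNReal.ofReal α + ν x a Set.univ)) ≤ v x := by
  intro x
  by_cases hvx : v x = ⊤
  · rw [hvx]; exact le_top
  have hvlt : v x < ⊤ := lt_top_iff_ne_top.2 hvx
  apply ENNReal.le_of_forall_pos_le_add
  intro ε hε _
  set A' := ENNReal.ofReal α with hA'
  set W := ENNReal.ofReal (w x) with hW
  have hA'0 : A' ≠ 0 := by
    simp [hA', ENNReal.ofReal_eq_zero, not_le, hα]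
  have hA't : A' ≠ ⊤ := ENNReal.ofReal_ne_top
  have hWt : W ≠ ⊤ := ENNReal.ofReal_ne_top
  have hDeq : ENNReal.ofReal (α + w x) = A' + W := ENNReal.ofReal_add hα.le (hw x).le
  set D := A' + W with hD
  have hD0 : D ≠ 0 := by simp [hD, hA'0]
  have hDt : D ≠ ⊤ := by simp [hD, ENNReal.add_ne_top, hA't, hWt]
  set δ := (ε : ℝ≥0∞) * A' / D with hδ
  have hδ0 : δ ≠ 0 := by
    rw [hδ]
    exact (ENNReal.div_pos (mul_ne_zero (by exact_mod_cast hε.ne') hA'0) hDt).ne'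
  have hlt : v x < v x + δ := ENNReal.lt_add_right hvx hδ0
  have h2 := lt_of_le_of_lt (le_of_eq (hfix x).symm) hlt
  rw [iInf_lt_iff] at h2
  obtain ⟨a, h2⟩ := h2
  rw [iInf_lt_iff] at h2
  obtain ⟨ha, h2⟩ := h2
  rw [hDeq, ENNReal.div_lt_iff (Or.inl hD0) (Or.inl hDt)] at h2
  set qa := ν x a Set.univ with hqa
  have hqW : qa ≤ W := hνw x a ha
  have hqt : qa ≠ ⊤ := (hqW.trans_lt (lt_top_iff_ne_top.2 hWt)).ne
  set C := ENNReal.ofReal (c x a) + ∫⁻ y, v y ∂(ν x a) with hC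
  -- key bound on RHS of h2
  have hδD : δ * D = (ε : ℝ≥0∞) * A' := ENNReal.div_mul_cancel hD0 hDt
  have hWsplit : W = qa + (W - qa) := (add_tsub_cancel_of_le hqW).symm
  have hrhs : (v x + δ) * D ≤ (v x + ε) * (A' + qa) + (W - qa) * v x := by
    calc (v x + δ) * D = v x * D + δ * D := add_mul _ _ _
      _ = v x * (A' + (qa + (W - qa))) + ε * A' := by rw [hδD, hD, ← hWsplit]
      _ = v x * A' + v x * qa + v x * (W - qa) + ε * A' := by ring
      _ ≤ v x * A' + v x * qa + v x * (W - qa) + ε * A' + ε * qa := le_self_add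
      _ = (v x * A' + v x * qa + ε * A' + ε * qa) + (W - qa) * v x := by ring
      _ = (v x + ε) * (A' + qa) + (W - qa) * v x := by ring
  have h3 : C + (W - qa) * v x ≤ (v x + ε) * (A' + qa) + (W - qa) * v x :=
    (h2.le).trans hrhs
  have hfin : (W - qa) * v x ≠ ⊤ :=
    ENNReal.mul_ne_top (by exact (tsub_le_self.trans_lt (lt_top_iff_ne_top.2 hWt)).ne) hvx
  have h4 : C ≤ (v x + ε) * (A' + qa) :=
    (ENNReal.add_le_add_iff_right hfin).1 h3
  have h5 : C / (A' + qa) ≤ v x + ε := by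
    rw [ENNReal.div_le_iff (by simp [hA'0]) (ENNReal.add_ne_top.2 ⟨hA't, hqt⟩)]
    exact h4
  exact le_trans (iInf₂_le a ha) h5
end

section
/- Let a ≤ b be real numbers and let c, q : ℝ → [0, ∞) be Borel measurable functions that are Lebesgue integrable on [a, b]. Then ∫_a^b c(s)·exp(−∫_a^s q(θ)dθ) ds = (∫_a^b c(θ)dθ)·exp(−∫_a^b q(θ)dθ) + ∫_a^b (∫_a^s c(θ)dθ)·q(s)·exp(−∫_a^s q(θ)dθ) ds. -/
open MeasureTheory intervalIntegral Set

namespace Stmt11Aux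

/-- q integrable times bounded measurable is integrable on s. -/
lemma integrable_mul_bdd {q h : ℝ → ℝ} (hqi : Integrable q (volume : Measure ℝ))
    (hq0 : ∀ t, 0 ≤ q t) (hqm : Measurable q) (hm : Measurable h) {s : Set ℝ}
    (hs : MeasurableSet s) (M : ℝ) (hb : ∀ t ∈ s, |h t| ≤ M) :
    IntegrableOn (fun t => q t * h t) s := by
  refine Integrable.mono' ((hqi.integrableOn).const_mul M)
    ((hqm.mul hm).aestronglyMeasurable) ?_
  filter_upwards [ae_restrict_mem hs] with t ht
  rw [Real.norm_eq_abs, abs_mul, abs_of_nonneg (hq0 t)]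
  calc q t * |h t| ≤ q t * M := by
        exact mul_le_mul_of_nonneg_left (hb t ht) (hq0 t)
    _ = M * q t := mul_comm _ _

/-- Fubini swap for triangular regions. -/
lemma key_swap (a b : ℝ) (f g : ℝ → ℝ) (hfm : Measurable f) (hgm : Measurable g)
    (hfi : IntegrableOn f (Ioc a b)) (hgi : IntegrableOn g (Ioc a b)) :
    ∫ t in Ioc a b, f t * ∫ u in Ioc a t, g u
      = ∫ u in Ioc a b, g u * ∫ t in Ioc u b, f t := by
  set μ := (volume : Measure ℝ).restrict (Ioc a b) with hμ
  set S : Set (ℝ × ℝ) := {p : ℝ × ℝ | a < p.2 ∧ p.2 ≤ p.1} with hS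
  have hSm : MeasurableSet S :=
    (measurableSet_lt measurable_const measurable_snd).inter
      (measurableSet_le measurable_snd measurable_fst)
  set F : ℝ × ℝ → ℝ := S.indicator (fun p => f p.1 * g p.2) with hF
  have hFm : Measurable F :=
    ((hfm.comp measurable_fst).mul (hgm.comp measurable_snd)).indicator hSm
  have hFint : Integrable F (μ.prod μ) := by
    have h1 : Integrable (fun p : ℝ × ℝ => |f p.1| * |g p.2|) (μ.prod μ) :=
      hfi.abs.mul_prod hgi.abs
    refine h1.mono' hFm.aestronglyMeasurable ?_
    filter_upwards with p
    calc ‖F p‖ ≤ ‖f p.1 * g p.2‖ := by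
          rw [hF]; exact norm_indicator_le_norm_self (fun p : ℝ × ℝ => f p.1 * g p.2) p
      _ = |f p.1| * |g p.2| := by rw [Real.norm_eq_abs, abs_mul]
  have e1 : ∀ t ∈ Ioc a b, (∫ u, F (t, u) ∂μ) = f t * ∫ u in Ioc a t, g u := by
    intro t ht
    have : ∀ u, F (t, u) = (Ioc a t).indicator (fun u => f t * g u) u := by
      intro u
      simp only [hF, hS, Set.indicator, Set.mem_setOf_eq, Set.mem_Ioc]
    simp_rw [this]
    rw [hμ, setIntegral_indicator measurableSet_Ioc]
    have : Ioc a b ∩ Ioc a t = Ioc a t := by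
      rw [Set.Ioc_inter_Ioc]
      simp [ht.2]
    rw [this, MeasureTheory.integral_const_mul]
  have e2 : ∀ u ∈ Ioc a b, (∫ t, F (t, u) ∂μ) = g u * ∫ t in Ioc u b, f t := by
    intro u hu
    have : ∀ t, F (t, u) = (Ici u).indicator (fun t => f t * g u) t := by
      intro t
      simp only [hF, hS, Set.indicator, Set.mem_setOf_eq, Set.mem_Ici]
      by_cases h : u ≤ t
      · simp [h, hu.1]
      · simp [h]
    simp_rw [this]
    rw [hμ, setIntegral_indicator measurableSet_Ici]
    have : Ioc a b ∩ Ici u = Icc u b := by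
      ext t
      simp only [Set.mem_inter_iff, Set.mem_Ioc, Set.mem_Ici, Set.mem_Icc]
      constructor
      · rintro ⟨⟨_, h2⟩, h3⟩; exact ⟨h3, h2⟩
      · rintro ⟨h1, h2⟩; exact ⟨⟨lt_of_lt_of_le hu.1 h1, h2⟩, h1⟩
    rw [this, setIntegral_congr_set (Ioc_ae_eq_Icc).symm, MeasureTheory.integral_mul_const, mul_comm]
  calc ∫ t in Ioc a b, f t * ∫ u in Ioc a t, g u
      = ∫ t, (∫ u, F (t, u) ∂μ) ∂μ := by
        rw [hμ]
        exact (setIntegral_congr_fun measurableSet_Ioc (fun t ht => (e1 t ht).symm))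
    _ = ∫ u, (∫ t, F (t, u) ∂μ) ∂μ := by
        exact (integral_integral_swap hFint)
    _ = ∫ u in Ioc a b, g u * ∫ t in Ioc u b, f t := by
        rw [hμ]
        exact setIntegral_congr_fun measurableSet_Ioc (fun u hu => e2 u hu)


section

variable {a : ℝ} {q : ℝ → ℝ} (hqi : Integrable q (volume : Measure ℝ))
  (hq0 : ∀ t, 0 ≤ q t) (hqm : Measurable q)

/-- The primitive of `q` starting at `a`. -/
noncomputable def QF (a : ℝ) (q : ℝ → ℝ) : ℝ → ℝ := fun x => ∫ t in Ioc a x, q t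

include hqi hq0 in
lemma QF_mono : Monotone (QF a q) := by
  intro x y hxy
  exact setIntegral_mono_set hqi.integrableOn
    (Filter.Eventually.of_forall hq0)
    (HasSubset.Subset.eventuallyLE (Ioc_subset_Ioc_right hxy))

include hq0 in
lemma QF_nonneg (x : ℝ) : 0 ≤ QF a q x := integral_nonneg fun t => hq0 t

include hqi hq0 in
lemma QF_add {u x : ℝ} (hau : a ≤ u) (hux : u ≤ x) :
    QF a q x = QF a q u + ∫ t in Ioc u x, q t := by
  rw [QF, QF, ← setIntegral_union (Set.Ioc_disjoint_Ioc_of_le le_rfl) measurableSet_Ioc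
    hqi.integrableOn hqi.integrableOn, Set.Ioc_union_Ioc_eq_Ioc hau hux]

include hqi hq0 hqm in
lemma integrable_q_pow (x : ℝ) (n : ℕ) :
    IntegrableOn (fun t => q t * QF a q t ^ n) (Ioc a x) := by
  refine integrable_mul_bdd hqi hq0 hqm ((QF_mono hqi hq0).measurable.pow_const n)
    measurableSet_Ioc (QF a q x ^ n) ?_
  intro t ht
  rw [abs_of_nonneg (pow_nonneg (QF_nonneg hq0 t) n)]
  exact pow_le_pow_left₀ (QF_nonneg hq0 t) (QF_mono hqi hq0 ht.2) n

include hqi hq0 hqm in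
lemma pow_identity (n : ℕ) (x : ℝ) :
    ((n : ℝ) + 1) * ∫ t in Ioc a x, q t * QF a q t ^ n = QF a q x ^ (n + 1) := by
  induction n generalizing x with
  | zero => simp [QF]
  | succ n IH =>
    have hQm : Measurable (QF a q) := (QF_mono hqi hq0).measurable
    set I := ∫ t in Ioc a x, q t * QF a q t ^ (n + 1) with hI
    have hg : Measurable (fun u => q u * QF a q u ^ n) := hqm.mul (hQm.pow_const n)
    have step1 : I = ((n : ℝ) + 1) *
        ∫ t in Ioc a x, q t * ∫ u in Ioc a t, q u * QF a q u ^ n := by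
      rw [← MeasureTheory.integral_const_mul]
      refine setIntegral_congr_fun measurableSet_Ioc (fun t _ => ?_)
      rw [← IH t]
      ring
    have step2 : (∫ t in Ioc a x, q t * ∫ u in Ioc a t, q u * QF a q u ^ n)
        = ∫ u in Ioc a x, (q u * QF a q u ^ n) * ∫ t in Ioc u x, q t :=
      key_swap a x q _ hqm hg hqi.integrableOn (integrable_q_pow hqi hq0 hqm x n)
    have step3 : ((n : ℝ) + 1) * ∫ u in Ioc a x, (q u * QF a q u ^ n) * ∫ t in Ioc u x, q t
        = QF a q x ^ (n + 2) - ((n : ℝ) + 1) * I := by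
      have e : ∀ u ∈ Ioc a x, (q u * QF a q u ^ n) * (∫ t in Ioc u x, q t)
          = QF a q x * (q u * QF a q u ^ n) - q u * QF a q u ^ (n + 1) := by
        intro u hu
        have : (∫ t in Ioc u x, q t) = QF a q x - QF a q u := by
          rw [QF_add hqi hq0 hu.1.le hu.2]; ring
        rw [this]; ring
      rw [setIntegral_congr_fun measurableSet_Ioc e,
        integral_sub ((integrable_q_pow hqi hq0 hqm x n).const_mul _)
          (integrable_q_pow hqi hq0 hqm x (n + 1)),
        MeasureTheory.integral_const_mul, ← hI]
      linear_combination (QF a q x) * (IH x)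
    have key : I = QF a q x ^ (n + 2) - ((n : ℝ) + 1) * I := by
      calc I = ((n : ℝ) + 1) *
            ∫ t in Ioc a x, q t * ∫ u in Ioc a t, q u * QF a q u ^ n := step1
        _ = ((n : ℝ) + 1) *
            ∫ u in Ioc a x, (q u * QF a q u ^ n) * ∫ t in Ioc u x, q t := by rw [step2]
        _ = QF a q x ^ (n + 2) - ((n : ℝ) + 1) * I := step3
    push_cast
    linear_combination key

include hqi hq0 hqm in
lemma pow_identity_div (n : ℕ) (x : ℝ) :
    ∫ t in Ioc a x, q t * QF a q t ^ n = QF a q x ^ (n + 1) / ((n : ℝ) + 1) := by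
  have hn1 : ((n : ℝ) + 1) ≠ 0 := by positivity
  rw [eq_div_iff hn1, mul_comm]
  exact pow_identity hqi hq0 hqm n x

include hqi hq0 hqm in
lemma exp_identity (x : ℝ) :
    ∫ t in Ioc a x, q t * Real.exp (-QF a q t) = 1 - Real.exp (-QF a q x) := by
  have hQm : Measurable (QF a q) := (QF_mono hqi hq0).measurable
  set Qx := QF a q x with hQx
  set F : ℕ → ℝ → ℝ := fun n t => q t * ((-QF a q t) ^ n / n.factorial) with hF
  have hFint : ∀ n, Integrable (F n) ((volume : Measure ℝ).restrict (Ioc a x)) := by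
    intro n
    refine integrable_mul_bdd hqi hq0 hqm ?_ measurableSet_Ioc
      (Qx ^ n / n.factorial) ?_
    · exact (hQm.neg.pow_const n).div_const _
    · intro t ht
      rw [abs_div, abs_pow, abs_neg, Nat.abs_cast,
        abs_of_nonneg (QF_nonneg hq0 t)]
      gcongr
      · exact QF_nonneg hq0 t
      · exact QF_mono hqi hq0 ht.2
  have hnorm : ∀ n, (∫ t in Ioc a x, ‖F n t‖) = Qx ^ (n + 1) / (n + 1).factorial := by
    intro n
    have e : ∀ t ∈ Ioc a x, ‖F n t‖ = (q t * QF a q t ^ n) / n.factorial := by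
      intro t ht
      rw [hF]
      simp only [Real.norm_eq_abs, abs_mul, abs_of_nonneg (hq0 t), abs_div, abs_pow,
        abs_neg, Nat.abs_cast, abs_of_nonneg (QF_nonneg hq0 t)]
      ring
    rw [setIntegral_congr_fun measurableSet_Ioc e, MeasureTheory.integral_div,
      pow_identity_div hqi hq0 hqm n x, Nat.factorial_succ, div_div]
    push_cast
    ring
  have hsum : Summable fun n => ∫ t in Ioc a x, ‖F n t‖ := by
    simp_rw [hnorm]
    exact (Real.summable_pow_div_factorial Qx).comp_injective Nat.succ_injective
  have hexp : ∀ y : ℝ, Real.exp y = ∑' n : ℕ, y ^ n / n.factorial := by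
    intro y
    rw [Real.exp_eq_exp_ℝ, NormedSpace.exp_eq_tsum_div]
  calc ∫ t in Ioc a x, q t * Real.exp (-QF a q t)
      = ∫ t in Ioc a x, ∑' n, F n t := by
        refine setIntegral_congr_fun measurableSet_Ioc (fun t _ => ?_)
        rw [hF]
        simp only []
        rw [tsum_mul_left, ← hexp (-QF a q t)]
    _ = ∑' n, ∫ t in Ioc a x, F n t :=
        (integral_tsum_of_summable_integral_norm hFint hsum).symm
    _ = 1 - Real.exp (-Qx) := by
        have hint : ∀ n, (∫ t in Ioc a x, F n t)
            = -((-Qx) ^ (n + 1) / (n + 1).factorial) := by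
          intro n
          have e : ∀ t ∈ Ioc a x, F n t
              = ((-1 : ℝ) ^ n / n.factorial) * (q t * QF a q t ^ n) := by
            intro t _
            rw [hF]
            simp only []
            rw [neg_pow]
            ring
          rw [setIntegral_congr_fun measurableSet_Ioc e, MeasureTheory.integral_const_mul,
            pow_identity_div hqi hq0 hqm n x, neg_pow, Nat.factorial_succ]
          push_cast
          have h1 : (n.factorial : ℝ) ≠ 0 := by exact_mod_cast (Nat.factorial_pos n).ne'
          have h2 : ((n : ℝ) + 1) ≠ 0 := by positivity
          field_simp
          ring
        simp_rw [hint]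
        have h0 : HasSum (fun n : ℕ => (-Qx) ^ n / n.factorial) (Real.exp (-Qx)) := by
          have h := (NormedSpace.expSeries_div_summable (-Qx)).hasSum
          rwa [← hexp (-Qx)] at h
        have h1 : HasSum (fun n : ℕ => (-Qx) ^ (n + 1) / (n + 1).factorial)
            (Real.exp (-Qx) - 1) := by
          have h := (hasSum_nat_add_iff'
            (f := fun n : ℕ => (-Qx) ^ n / n.factorial) 1).2 h0
          simpa using h
        have h2 := h1.neg
        rw [neg_sub] at h2
        exact h2.tsum_eq

include hqi hq0 hqm in
lemma exp_identity' {s b : ℝ} (has : a ≤ s) (hsb : s ≤ b) :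
    ∫ t in Ioc s b, q t * Real.exp (-QF a q t)
      = Real.exp (-QF a q s) - Real.exp (-QF a q b) := by
  have hEm : Measurable fun t => Real.exp (-QF a q t) :=
    Real.measurable_exp.comp (QF_mono hqi hq0).measurable.neg
  have hInt : ∀ u v : ℝ, IntegrableOn (fun t => q t * Real.exp (-QF a q t)) (Ioc u v) := by
    intro u v
    refine integrable_mul_bdd hqi hq0 hqm hEm measurableSet_Ioc 1 (fun t _ => ?_)
    rw [abs_of_nonneg (Real.exp_pos _).le]
    rw [← Real.exp_zero]
    exact Real.exp_le_exp.mpr (neg_nonpos.mpr (QF_nonneg hq0 t))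
  have hsplit : ∫ t in Ioc a b, q t * Real.exp (-QF a q t)
      = (∫ t in Ioc a s, q t * Real.exp (-QF a q t))
        + ∫ t in Ioc s b, q t * Real.exp (-QF a q t) := by
    rw [← setIntegral_union (Set.Ioc_disjoint_Ioc_of_le le_rfl) measurableSet_Ioc (hInt a s) (hInt s b),
      Set.Ioc_union_Ioc_eq_Ioc has hsb]
  rw [exp_identity hqi hq0 hqm b, exp_identity hqi hq0 hqm s] at hsplit
  linarith

end

end Stmt11Aux

open Stmt11Aux

/-- Integration by parts: for `a ≤ b` and nonnegative Borel functions `c, q` that are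
Lebesgue integrable on `[a,b]`,
`∫_a^b c(s) e^{−∫_a^s q} ds
  = (∫_a^b c) e^{−∫_a^b q} + ∫_a^b (∫_a^s c) q(s) e^{−∫_a^s q} ds`. -/
theorem stmt11 (a b : ℝ) (hab : a ≤ b) (c q : ℝ → ℝ)
    (hcm : Measurable c) (hqm : Measurable q)
    (hc0 : ∀ t, 0 ≤ c t) (hq0 : ∀ t, 0 ≤ q t)
    (hci : IntegrableOn c (Set.Icc a b)) (hqi : IntegrableOn q (Set.Icc a b)) :
    ∫ s in a..b, c s * Real.exp (-∫ θ in a..s, q θ)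
      = (∫ θ in a..b, c θ) * Real.exp (-∫ θ in a..b, q θ)
        + ∫ s in a..b, (∫ θ in a..s, c θ) * q s * Real.exp (-∫ θ in a..s, q θ) := by
  classical
  set c' := (Set.Icc a b).indicator c with hc'
  set q' := (Set.Icc a b).indicator q with hq'
  have hc'm : Measurable c' := hcm.indicator measurableSet_Icc
  have hq'm : Measurable q' := hqm.indicator measurableSet_Icc
  have hc'0 : ∀ t, 0 ≤ c' t := fun t => Set.indicator_nonneg (fun t _ => hc0 t) t
  have hq'0 : ∀ t, 0 ≤ q' t := fun t => Set.indicator_nonneg (fun t _ => hq0 t) t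
  have hc'i : Integrable c' (volume : Measure ℝ) :=
    hci.integrable_indicator measurableSet_Icc
  have hq'i : Integrable q' (volume : Measure ℝ) :=
    hqi.integrable_indicator measurableSet_Icc
  set Q : ℝ → ℝ := QF a q' with hQ
  set E : ℝ → ℝ := fun t => Real.exp (-Q t) with hE
  set C : ℝ → ℝ := fun s => ∫ t in Ioc a s, c' t with hC
  have hQm : Measurable Q := (QF_mono hq'i hq'0).measurable
  have hEm : Measurable E := Real.measurable_exp.comp hQm.neg
  have hE1 : ∀ t, E t ≤ 1 := by
    intro t
    rw [hE]
    simp only []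
    rw [← Real.exp_zero]
    exact Real.exp_le_exp.mpr (neg_nonpos.mpr (QF_nonneg hq'0 t))
  have hEpos : ∀ t, 0 < E t := fun t => Real.exp_pos _
  have hQeq : ∀ s, a ≤ s → s ≤ b → (∫ θ in a..s, q θ) = Q s := by
    intro s h1 h2
    rw [intervalIntegral.integral_of_le h1, hQ, QF]
    refine setIntegral_congr_fun measurableSet_Ioc (fun t ht => ?_)
    exact (Set.indicator_of_mem (Set.mem_Icc.mpr ⟨ht.1.le, ht.2.trans h2⟩) q).symm
  have hCeq : ∀ s, a ≤ s → s ≤ b → (∫ θ in a..s, c θ) = C s := by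
    intro s h1 h2
    rw [intervalIntegral.integral_of_le h1, hC]
    refine setIntegral_congr_fun measurableSet_Ioc (fun t ht => ?_)
    exact (Set.indicator_of_mem (Set.mem_Icc.mpr ⟨ht.1.le, ht.2.trans h2⟩) c).symm
  have hL : (∫ s in a..b, c s * Real.exp (-∫ θ in a..s, q θ))
      = ∫ s in Ioc a b, c' s * E s := by
    rw [intervalIntegral.integral_of_le hab]
    refine setIntegral_congr_fun measurableSet_Ioc (fun s hs => ?_)
    rw [hQeq s hs.1.le hs.2, hc',
      Set.indicator_of_mem (Set.mem_Icc.mpr ⟨hs.1.le, hs.2⟩) c]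
  have hR2 : (∫ s in a..b, (∫ θ in a..s, c θ) * q s * Real.exp (-∫ θ in a..s, q θ))
      = ∫ s in Ioc a b, C s * q' s * E s := by
    rw [intervalIntegral.integral_of_le hab]
    refine setIntegral_congr_fun measurableSet_Ioc (fun s hs => ?_)
    rw [hQeq s hs.1.le hs.2, hCeq s hs.1.le hs.2, hq',
      Set.indicator_of_mem (Set.mem_Icc.mpr ⟨hs.1.le, hs.2⟩) q]
  have hR1 : (∫ θ in a..b, c θ) * Real.exp (-∫ θ in a..b, q θ) = C b * E b := by
    rw [hQeq b hab le_rfl, hCeq b hab le_rfl]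
  rw [hL, hR1, hR2]
  -- integrability facts
  have hqEint : ∀ u v : ℝ, IntegrableOn (fun t => q' t * E t) (Ioc u v) := by
    intro u v
    refine integrable_mul_bdd hq'i hq'0 hq'm hEm measurableSet_Ioc 1 (fun t _ => ?_)
    rw [abs_of_nonneg (hEpos t).le]
    exact hE1 t
  have h2int : IntegrableOn (fun s => c' s * (E s - E b)) (Ioc a b) := by
    refine Integrable.mono' hc'i.integrableOn.abs
      ((hc'm.mul (hEm.sub measurable_const)).aestronglyMeasurable) ?_
    filter_upwards with s
    rw [Real.norm_eq_abs, abs_mul]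
    have h1 : |E s - E b| ≤ 1 := by
      rw [abs_sub_le_iff]
      constructor
      · linarith [hE1 s, hEpos b]
      · linarith [hE1 b, hEpos s]
    calc |c' s| * |E s - E b| ≤ |c' s| * 1 :=
          mul_le_mul_of_nonneg_left h1 (abs_nonneg _)
      _ = |c' s| := mul_one _
  -- main computation
  calc ∫ s in Ioc a b, c' s * E s
      = ∫ s in Ioc a b, (c' s * E b + c' s * (E s - E b)) := by
        refine setIntegral_congr_fun measurableSet_Ioc (fun s _ => ?_)
        ring
    _ = (∫ s in Ioc a b, c' s * E b) + ∫ s in Ioc a b, c' s * (E s - E b) :=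
        integral_add (hc'i.integrableOn.mul_const _) h2int
    _ = C b * E b + ∫ s in Ioc a b, c' s * (E s - E b) := by
        rw [MeasureTheory.integral_mul_const, hC]
    _ = C b * E b + ∫ s in Ioc a b, c' s * ∫ t in Ioc s b, q' t * E t := by
        congr 1
        refine setIntegral_congr_fun measurableSet_Ioc (fun s hs => ?_)
        rw [exp_identity' hq'i hq'0 hq'm hs.1.le hs.2]
    _ = C b * E b + ∫ s in Ioc a b, (q' s * E s) * ∫ t in Ioc a s, c' t := by
        congr 1
        exact (key_swap a b (fun t => q' t * E t) c' (hq'm.mul hEm) hc'm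
          (hqEint a b) hc'i.integrableOn).symm
    _ = C b * E b + ∫ s in Ioc a b, C s * q' s * E s := by
        congr 1
        refine setIntegral_congr_fun measurableSet_Ioc (fun s _ => ?_)
        rw [hC]
        ring
end

section
/- Let d : K → [0, +∞] be K-inf-compact. Define v_0(x) := 0 for all x ∈ S and, recursively, v_{n+1}(x) := inf_{a ∈ A(x)} ( d(x,a) + ∫_S v_n dQ(x,a) ) for every n ≥ 0 and x ∈ S. Then the sequence (v_n) is pointwise nondecreasing, each v_n is lower semicontinuous on S, and the pointwise limit v_∞(x) := sup_n v_n(x) is lower semicontinuous on S and satisfies the Bellman equation v_∞(x) = inf_{a ∈ A(x)} ( d(x,a) + ∫_S v_∞ dQ(x,a) ) for every x ∈ S. -/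
open Filter Topology MeasureTheory ENNReal

/-- `f : K → [0, +∞]` is `K`-inf-compact on the graph `K = {(x,a) : x ∈ S, a ∈ A(x)}`
of the multifunction `As`. -/
def KInfCompactENN {S A : Type*} [MetricSpace S] [MetricSpace A]
    (As : S → Set A) (f : S × A → ℝ≥0∞) : Prop :=
  LowerSemicontinuousOn f {p : S × A | p.2 ∈ As p.1} ∧
    ∀ (xs : ℕ → S) (as : ℕ → A) (x : S),
      Tendsto xs atTop (𝓝 x) → (∀ n, as n ∈ As (xs n)) →
      (∃ M : ℝ, ∀ n, f (xs n, as n) ≤ ENNReal.ofReal M) →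
      ∃ a ∈ As x, ∃ φ : ℕ → ℕ, StrictMono φ ∧ Tendsto (as ∘ φ) atTop (𝓝 a)

section Aux
open Set

lemma auxA0 {Ω : Type*} [MeasurableSpace Ω] [TopologicalSpace Ω] [OpensMeasurableSpace Ω]
    {μ : Measure Ω} {μs : ℕ → Measure Ω} {f : Ω → ℝ} (f_lsc : LowerSemicontinuous f) (f_nn : 0 ≤ f)
    (h_opens : ∀ G, IsOpen G → μ G ≤ atTop.liminf (fun i ↦ μs i G)) :
    ∫⁻ x, ENNReal.ofReal (f x) ∂μ ≤ atTop.liminf (fun i ↦ ∫⁻ x, ENNReal.ofReal (f x) ∂(μs i)) := by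
  simp_rw [lintegral_eq_lintegral_meas_lt _ (Eventually.of_forall f_nn)
    f_lsc.measurable.aemeasurable]
  calc  ∫⁻ (t : ℝ) in Set.Ioi 0, μ {a | t < f a}
      ≤ ∫⁻ (t : ℝ) in Set.Ioi 0, atTop.liminf (fun i ↦ (μs i) {a | t < f a}) := ?_
    _ ≤ atTop.liminf (fun i ↦ ∫⁻ (t : ℝ) in Set.Ioi 0, (μs i) {a | t < f a}) := ?_
  · exact (lintegral_mono (fun t ↦ h_opens _ (f_lsc.isOpen_preimage t))).trans (le_refl _)
  · exact lintegral_liminf_le (fun n ↦ Antitone.measurable (fun s t hst ↦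
            measure_mono (fun ω hω ↦ lt_of_le_of_lt hst hω)))

lemma auxmin {a : ℝ≥0∞} : ⨆ n : ℕ, min a n = a := by
  rw [← inf_iSup_eq (a := a) (f := fun n : ℕ => (n : ℝ≥0∞))]
  simp [ENNReal.iSup_natCast]

lemma auxA1 {Ω : Type*} [MeasurableSpace Ω] [TopologicalSpace Ω] [OpensMeasurableSpace Ω]
    {μ : Measure Ω} {μs : ℕ → Measure Ω} {g : Ω → ℝ≥0∞} (hg : LowerSemicontinuous g)
    (h_opens : ∀ G, IsOpen G → μ G ≤ atTop.liminf (fun i ↦ μs i G)) :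
    ∫⁻ x, g x ∂μ ≤ atTop.liminf (fun i ↦ ∫⁻ x, g x ∂(μs i)) := by
  have key : ∀ n : ℕ, ∫⁻ x, min (g x) n ∂μ ≤ atTop.liminf (fun i ↦ ∫⁻ x, g x ∂(μs i)) := by
    intro n
    set f : Ω → ℝ := fun x => (min (g x) n).toReal with hf
    have hfin : ∀ x, min (g x) n ≠ ∞ := fun x =>
      (lt_of_le_of_lt (min_le_right _ _) (ENNReal.natCast_lt_top n)).ne
    have hof : ∀ x, ENNReal.ofReal (f x) = min (g x) n := fun x => ENNReal.ofReal_toReal (hfin x)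
    have f_nn : 0 ≤ f := fun x => ENNReal.toReal_nonneg
    have f_lsc : LowerSemicontinuous f := by
      intro x c hc
      rcases lt_or_ge c 0 with h0 | h0
      · exact Eventually.of_forall fun y => lt_of_lt_of_le h0 (f_nn y)
      · have h1 : ENNReal.ofReal c < min (g x) n := by
          rw [← hof x]
          exact (ENNReal.ofReal_lt_ofReal_iff_of_nonneg h0).mpr hc
        have h2 : ENNReal.ofReal c < g x := h1.trans_le (min_le_left _ _)
        have h3 : ENNReal.ofReal c < n := h1.trans_le (min_le_right _ _)
        filter_upwards [hg x _ h2] with y hy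
        have h4 : ENNReal.ofReal c < min (g y) n := lt_min hy h3
        have := ENNReal.toReal_strict_mono (hfin y) h4
        rwa [ENNReal.toReal_ofReal h0] at this
    have h5 := auxA0 f_lsc f_nn h_opens
    simp_rw [hof] at h5
    refine h5.trans (liminf_le_liminf (Eventually.of_forall fun i => ?_))
    exact lintegral_mono fun x => min_le_left _ _
  have h6 : ∫⁻ x, g x ∂μ = ⨆ n : ℕ, ∫⁻ x, min (g x) n ∂μ := by
    rw [← lintegral_iSup (fun n => hg.measurable.min measurable_const)
      (fun a b hab x => min_le_min le_rfl (by exact_mod_cast Nat.cast_le.mpr hab))]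
    simp_rw [auxmin]
  rw [h6]
  exact iSup_le key

section Kernel
variable {S A : Type*} [MetricSpace S] [MetricSpace A] [MeasurableSpace S] [BorelSpace S]
  {As : S → Set A} {Q : S × A → Measure S}
  (hQprob : ∀ p : S × A, p.2 ∈ As p.1 → IsProbabilityMeasure (Q p))
  (hQweak : ∀ f : BoundedContinuousFunction S ℝ,
      ContinuousOn (fun p : S × A => ∫ y, f y ∂(Q p)) {p : S × A | p.2 ∈ As p.1})

include hQprob hQweak

lemma auxA2 {g : S → ℝ≥0∞} (hg : LowerSemicontinuous g)
    {p : ℕ → S × A} {q : S × A} (hq : q.2 ∈ As q.1) (hp : ∀ k, (p k).2 ∈ As (p k).1)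
    (hten : Tendsto p atTop (𝓝 q)) :
    ∫⁻ x, g x ∂(Q q) ≤ atTop.liminf fun k => ∫⁻ x, g x ∂(Q (p k)) := by
  let ν : ℕ → ProbabilityMeasure S := fun k => ⟨Q (p k), hQprob _ (hp k)⟩
  let ν' : ProbabilityMeasure S := ⟨Q q, hQprob q hq⟩
  have htend : Tendsto ν atTop (𝓝 ν') := by
    rw [ProbabilityMeasure.tendsto_iff_forall_integral_tendsto]
    intro f
    have h1 : Tendsto p atTop (𝓝[{p : S × A | p.2 ∈ As p.1}] q) :=
      tendsto_nhdsWithin_iff.mpr ⟨hten, Eventually.of_forall hp⟩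
    exact (hQweak f q hq).tendsto.comp h1
  have h_opens : ∀ G, IsOpen G → Q q G ≤ atTop.liminf (fun k ↦ Q (p k) G) := fun G hG =>
    ProbabilityMeasure.le_liminf_measure_open_of_tendsto htend hG
  exact auxA1 hg h_opens

lemma auxA {g : S → ℝ≥0∞} (hg : LowerSemicontinuous g) :
    LowerSemicontinuousOn (fun p => ∫⁻ y, g y ∂(Q p)) {p : S × A | p.2 ∈ As p.1} := by
  intro q hq c hc
  by_contra h
  have hfreq : ∃ᶠ r in 𝓝[{p : S × A | p.2 ∈ As p.1}] q, ¬ c < ∫⁻ y, g y ∂(Q r) :=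
    Filter.not_eventually.mp h
  obtain ⟨ps, hps_t, hps⟩ := exists_seq_forall_of_frequently hfreq
  rw [tendsto_nhdsWithin_iff] at hps_t
  obtain ⟨N, hN⟩ := hps_t.2.exists_forall_of_atTop
  set p' : ℕ → S × A := fun k => ps (k + N) with hp'
  have hmem : ∀ k, (p' k).2 ∈ As (p' k).1 := fun k => hN _ (Nat.le_add_left N k)
  have hten' : Tendsto p' atTop (𝓝 q) := hps_t.1.comp (tendsto_add_atTop_nat N)
  have hle := auxA2 hQprob hQweak hg hq hmem hten'
  have h2 : atTop.liminf (fun k => ∫⁻ y, g y ∂(Q (p' k))) ≤ c := by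
    refine (liminf_le_liminf (Eventually.of_forall fun k => ?_)).trans_eq (liminf_const c)
    exact not_lt.mp (hps (k + N))
  exact absurd hc (not_lt.mpr (hle.trans h2))

end Kernel

lemma auxC {S A : Type*} [MetricSpace S] [MetricSpace A] (As : S → Set A)
    (d u : S × A → ℝ≥0∞) (hd : KInfCompactENN As d)
    (hu_lsc : LowerSemicontinuousOn u {p : S × A | p.2 ∈ As p.1})
    (hdu : ∀ p, d p ≤ u p) :
    LowerSemicontinuous (fun x => ⨅ a ∈ As x, u (x, a)) := by
  intro x c hc
  by_contra h
  have hc_top : c ≠ ⊤ := hc.ne_top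
  have hfreq : ∃ᶠ y in 𝓝 x, (⨅ a ∈ As y, u (y, a)) ≤ c := by
    simpa using Filter.not_eventually.mp h
  obtain ⟨xs, hxs_t, hxs⟩ := exists_seq_forall_of_frequently hfreq
  have hch : ∀ k : ℕ, ∃ a ∈ As (xs k), u (xs k, a) < c + ((k : ℝ≥0∞) + 1)⁻¹ := by
    intro k
    have hpos : ((k : ℝ≥0∞) + 1)⁻¹ ≠ 0 := by
      simp [ENNReal.inv_ne_zero, ENNReal.add_ne_top]
    have h1 : (⨅ a ∈ As (xs k), u (xs k, a)) < c + ((k : ℝ≥0∞) + 1)⁻¹ :=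
      lt_of_le_of_lt (hxs k) (ENNReal.lt_add_right hc_top hpos)
    obtain ⟨a, ha⟩ := iInf_lt_iff.mp h1
    by_cases hmem : a ∈ As (xs k)
    · rw [iInf_pos hmem] at ha
      exact ⟨a, hmem, ha⟩
    · rw [iInf_neg hmem] at ha
      exact absurd ha (not_lt.mpr le_top)
  choose as has hult using hch
  have hfin : c + 1 ≠ ⊤ := by simp [ENNReal.add_ne_top, hc_top]
  have hb : ∀ k, d (xs k, as k) ≤ ENNReal.ofReal (c + 1).toReal := by
    intro k
    rw [ENNReal.ofReal_toReal hfin]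
    refine (hdu _).trans ((hult k).le.trans (add_le_add_right ?_ c))
    exact ENNReal.inv_le_one.mpr (le_add_self)
  obtain ⟨a, haA, φ, hφ, hconv⟩ := hd.2 xs as x hxs_t has ⟨(c + 1).toReal, hb⟩
  have hpt : Tendsto (fun k => ((xs (φ k), as (φ k)) : S × A)) atTop (𝓝 (x, a)) :=
    (hxs_t.comp hφ.tendsto_atTop).prodMk_nhds hconv
  have hmain : ¬ c < u (x, a) := by
    intro hc2
    obtain ⟨b, hb1, hb2⟩ := exists_between hc2
    have hseq : Tendsto (fun k => ((xs (φ k), as (φ k)) : S × A)) atTop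
        (𝓝[{p : S × A | p.2 ∈ As p.1}] (x, a)) :=
      tendsto_nhdsWithin_iff.mpr ⟨hpt, Eventually.of_forall fun k => has (φ k)⟩
    have hev1 := hseq.eventually (hu_lsc (x, a) haA b hb2)
    have hbc : (0 : ℝ≥0∞) < b - c := tsub_pos_iff_lt.mpr hb1
    have htend0 : Tendsto (fun k => ((φ k : ℝ≥0∞) + 1)⁻¹) atTop (𝓝 0) := by
      have h0 : Tendsto (fun n : ℕ => ((n : ℝ≥0∞) + 1)⁻¹) atTop (𝓝 0) := by
        have := ENNReal.tendsto_inv_nat_nhds_zero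
        refine tendsto_of_tendsto_of_tendsto_of_le_of_le tendsto_const_nhds this ?_ ?_
        · intro n; exact zero_le
        · intro n; exact ENNReal.inv_le_inv.mpr le_self_add
      exact h0.comp hφ.tendsto_atTop
    have hev2 : ∀ᶠ k in atTop, ((φ k : ℝ≥0∞) + 1)⁻¹ < b - c :=
      htend0.eventually_lt_const hbc |>.mono (fun k hk => hk)
    obtain ⟨k, hk1, hk2⟩ := (hev1.and hev2).exists
    have : u (xs (φ k), as (φ k)) < b := by
      calc u (xs (φ k), as (φ k)) < c + ((φ k : ℝ≥0∞) + 1)⁻¹ := hult (φ k)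
        _ < c + (b - c) := ENNReal.add_lt_add_left hc_top hk2
        _ = b := add_tsub_cancel_of_le hb1.le
    exact absurd hk1 (not_lt.mpr this.le)
  have hfinal : (⨅ a ∈ As x, u (x, a)) ≤ c := le_trans (iInf₂_le a haA) (not_lt.mp hmain)
  exact absurd hc (not_lt.mpr hfinal)

end Aux

/-- Value iteration: for a `K`-inf-compact cost `d : K → [0,+∞]` and a weakly continuous
probability kernel `Q` on `K`, the iterates `v₀ := 0`,
`v_{n+1}(x) := inf_{a ∈ A(x)} ( d(x,a) + ∫_S v_n dQ(x,a) )` are pointwise nondecreasing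
and lower semicontinuous, and the pointwise limit `v_∞ = sup_n v_n` is lower
semicontinuous and satisfies the Bellman equation
`v_∞(x) = inf_{a ∈ A(x)} ( d(x,a) + ∫_S v_∞ dQ(x,a) )`. -/
theorem stmt12 {S A : Type*} [MetricSpace S] [MetricSpace A]
    [MeasurableSpace S] [BorelSpace S]
    (As : S → Set A) (hAs : ∀ x, (As x).Nonempty)
    (Q : S × A → Measure S)
    (hQprob : ∀ p : S × A, p.2 ∈ As p.1 → IsProbabilityMeasure (Q p))
    (hQweak : ∀ f : BoundedContinuousFunction S ℝ,
      ContinuousOn (fun p : S × A => ∫ y, f y ∂(Q p)) {p : S × A | p.2 ∈ As p.1})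
    (d : S × A → ℝ≥0∞) (hd : KInfCompactENN As d)
    (v : ℕ → S → ℝ≥0∞)
    (hv0 : ∀ x, v 0 x = 0)
    (hvrec : ∀ n x, v (n + 1) x = ⨅ a ∈ As x, (d (x, a) + ∫⁻ y, v n y ∂(Q (x, a)))) :
    (∀ n x, v n x ≤ v (n + 1) x)
    ∧ (∀ n, LowerSemicontinuous (v n))
    ∧ LowerSemicontinuous (fun x => ⨆ n, v n x)
    ∧ ∀ x, (⨆ n, v n x)
        = ⨅ a ∈ As x, (d (x, a) + ∫⁻ y, (⨆ n, v n y) ∂(Q (x, a))) := by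
  have hmono : ∀ n x, v n x ≤ v (n + 1) x := by
    intro n
    induction n with
    | zero => intro x; rw [hv0]; exact zero_le
    | succ n ih =>
      intro x
      rw [hvrec n x, hvrec (n + 1) x]
      exact iInf_mono fun a => iInf_mono fun _ =>
        add_le_add_right (lintegral_mono fun y => ih y) _
  have hlsc : ∀ n, LowerSemicontinuous (v n) := by
    intro n
    induction n with
    | zero =>
      have h0 : v 0 = fun _ => (0 : ℝ≥0∞) := funext hv0
      rw [h0]; exact lowerSemicontinuous_const
    | succ n ih =>
      have hI : LowerSemicontinuousOn (fun p : S × A => ∫⁻ y, v n y ∂(Q p))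
          {p : S × A | p.2 ∈ As p.1} := auxA hQprob hQweak ih
      have hu : LowerSemicontinuousOn (fun p : S × A => d p + ∫⁻ y, v n y ∂(Q p))
          {p : S × A | p.2 ∈ As p.1} := hd.1.add hI
      have h2 : v (n + 1) = fun x => ⨅ a ∈ As x, (d (x, a) + ∫⁻ y, v n y ∂(Q (x, a))) :=
        funext (hvrec n)
      rw [h2]
      exact auxC As d _ hd hu fun p => le_self_add
  have hmonoall : ∀ x, Monotone fun n => v n x := fun x =>
    monotone_nat_of_le_succ fun n => hmono n x
  refine ⟨hmono, hlsc, lowerSemicontinuous_iSup fun n => hlsc n, ?_⟩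
  intro x
  set w : S → ℝ≥0∞ := fun y => ⨆ n, v n y with hw
  have hwint : ∀ p : S × A, ∫⁻ y, w y ∂(Q p) = ⨆ n, ∫⁻ y, v n y ∂(Q p) := fun p =>
    lintegral_iSup (fun n => (hlsc n).measurable) fun a b hab y => hmonoall y hab
  apply le_antisymm
  · refine le_iInf₂ fun a ha => ?_
    refine iSup_le fun n => ?_
    cases n with
    | zero => rw [hv0]; exact zero_le
    | succ n =>
      rw [hvrec n x]
      refine le_trans (iInf₂_le a ha) ?_
      exact add_le_add_right (lintegral_mono fun y => le_iSup (fun m => v m y) n) _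
  · by_cases hwx : w x = ⊤
    · exact le_top.trans hwx.symm.le
    have hch : ∀ n : ℕ, ∃ a ∈ As x,
        d (x, a) + ∫⁻ y, v n y ∂(Q (x, a)) < w x + ((n : ℝ≥0∞) + 1)⁻¹ := by
      intro n
      have h1 : v (n + 1) x ≤ w x := le_iSup (fun m => v m x) (n + 1)
      rw [hvrec n x] at h1
      have h2 : (⨅ a ∈ As x, (d (x, a) + ∫⁻ y, v n y ∂(Q (x, a))))
          < w x + ((n : ℝ≥0∞) + 1)⁻¹ :=
        lt_of_le_of_lt h1 (ENNReal.lt_add_right hwx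
          (by simp [ENNReal.inv_ne_zero, ENNReal.add_ne_top]))
      obtain ⟨a, ha⟩ := iInf_lt_iff.mp h2
      by_cases hmem : a ∈ As x
      · rw [iInf_pos hmem] at ha; exact ⟨a, hmem, ha⟩
      · rw [iInf_neg hmem] at ha; exact absurd ha (not_lt.mpr le_top)
    choose as has hult using hch
    have hfin : w x + 1 ≠ ⊤ := by simp [ENNReal.add_ne_top, hwx]
    have hbnd : ∀ n, d (x, as n) ≤ ENNReal.ofReal (w x + 1).toReal := by
      intro n
      rw [ENNReal.ofReal_toReal hfin]
      calc d (x, as n) ≤ d (x, as n) + ∫⁻ y, v n y ∂(Q (x, as n)) := le_self_add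
        _ ≤ w x + ((n : ℝ≥0∞) + 1)⁻¹ := (hult n).le
        _ ≤ w x + 1 := add_le_add_right (ENNReal.inv_le_one.mpr le_add_self) _
    obtain ⟨a, haA, φ, hφ, hconv⟩ := hd.2 (fun _ => x) as x tendsto_const_nhds has
      ⟨(w x + 1).toReal, hbnd⟩
    have hstep : ∀ m : ℕ, d (x, a) + ∫⁻ y, v m y ∂(Q (x, a)) ≤ w x := by
      intro m
      by_contra hlt
      push_neg at hlt
      obtain ⟨b, hb1, hb2⟩ := exists_between hlt
      have hu : LowerSemicontinuousOn (fun p : S × A => d p + ∫⁻ y, v m y ∂(Q p))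
          {p : S × A | p.2 ∈ As p.1} := hd.1.add (auxA hQprob hQweak (hlsc m))
      have hseq : Tendsto (fun k => ((x, as (φ k)) : S × A)) atTop
          (𝓝[{p : S × A | p.2 ∈ As p.1}] (x, a)) :=
        tendsto_nhdsWithin_iff.mpr ⟨tendsto_const_nhds.prodMk_nhds hconv,
          Eventually.of_forall fun k => has (φ k)⟩
      have hev1 := hseq.eventually (hu (x, a) haA b hb2)
      have hbc : (0 : ℝ≥0∞) < b - w x := tsub_pos_iff_lt.mpr hb1
      have htend0 : Tendsto (fun k => ((φ k : ℝ≥0∞) + 1)⁻¹) atTop (𝓝 0) := by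
        have h0 : Tendsto (fun n : ℕ => ((n : ℝ≥0∞) + 1)⁻¹) atTop (𝓝 0) := by
          refine tendsto_of_tendsto_of_tendsto_of_le_of_le tendsto_const_nhds
            ENNReal.tendsto_inv_nat_nhds_zero (fun n => zero_le)
            (fun n => ENNReal.inv_le_inv.mpr le_self_add)
        exact h0.comp hφ.tendsto_atTop
      have hev2 : ∀ᶠ k in atTop, ((φ k : ℝ≥0∞) + 1)⁻¹ < b - w x :=
        htend0.eventually_lt_const hbc
      have hev3 : ∀ᶠ k in atTop, m ≤ φ k := hφ.tendsto_atTop.eventually_ge_atTop m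
      obtain ⟨k, hk1, hk2, hk3⟩ := (hev1.and (hev2.and hev3)).exists
      have hlt2 : d (x, as (φ k)) + ∫⁻ y, v m y ∂(Q (x, as (φ k))) < b := by
        calc d (x, as (φ k)) + ∫⁻ y, v m y ∂(Q (x, as (φ k)))
            ≤ d (x, as (φ k)) + ∫⁻ y, v (φ k) y ∂(Q (x, as (φ k))) :=
              add_le_add_right (lintegral_mono fun y => hmonoall y hk3) _
          _ < w x + ((φ k : ℝ≥0∞) + 1)⁻¹ := hult (φ k)
          _ < w x + (b - w x) := ENNReal.add_lt_add_left hwx hk2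
          _ = b := add_tsub_cancel_of_le hb1.le
      exact absurd hk1 (not_lt.mpr hlt2.le)
    refine (iInf₂_le a haA).trans ?_
    rw [hwint (x, a), ENNReal.add_iSup]
    exact iSup_le hstep
end

section
/- Suppose a Borel measurable v : S → [0, ∞) satisfies v(x) = inf_{a ∈ A(x)} ( c(x,a)/(α + w(x)) + (w(x)/(w(x) + α))·∫_S v dP(x,a) ) for every x ∈ S, where the integrals are Lebesgue integrals with values in [0, +∞]. Put m := inf_{x ∈ S} v(x) and h(x) := v(x) − m. Then for every x ∈ S, (w(x) + α)·h(x) + α·m = inf_{a ∈ A(x)} ( c(x,a) + w(x)·∫_S h dP(x,a) ). -/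
open Filter Topology MeasureTheory ENNReal

/-- If a Borel measurable `v : S → [0, ∞)` satisfies
`v(x) = inf_{a ∈ A(x)} ( c(x,a)/(α + w(x)) + (w(x)/(w(x)+α)) ∫_S v dP(x,a) )`
for every `x`, then with `m := inf_{x ∈ S} v(x)` and `h := v − m`, for every `x ∈ S`:
`(w(x)+α)·h(x) + α·m = inf_{a ∈ A(x)} ( c(x,a) + w(x) ∫_S h dP(x,a) )`. -/
theorem stmt13 {S A : Type*} [MetricSpace S] [Nonempty S]
    [MeasurableSpace S] [BorelSpace S]
    (As : S → Set A) (hAs : ∀ x, (As x).Nonempty)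
    (P : S → A → Measure S) (hP : ∀ x, ∀ a ∈ As x, IsProbabilityMeasure (P x a))
    (α : ℝ) (hα : 0 < α) (w : S → ℝ) (hw : ∀ x, 0 < w x)
    (c : S → A → ℝ) (hc0 : ∀ x, ∀ a ∈ As x, 0 ≤ c x a)
    (v : S → ℝ) (hvm : Measurable v) (hv0 : ∀ x, 0 ≤ v x)
    (hfix : ∀ x : S, ENNReal.ofReal (v x) = ⨅ a ∈ As x,
      (ENNReal.ofReal (c x a) / ENNReal.ofReal (α + w x)
        + (ENNReal.ofReal (w x) / ENNReal.ofReal (w x + α))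
            * ∫⁻ y, ENNReal.ofReal (v y) ∂(P x a))) :
    ∀ x : S,
      ENNReal.ofReal ((w x + α) * (v x - ⨅ z, v z)) + ENNReal.ofReal (α * ⨅ z, v z)
        = ⨅ a ∈ As x, (ENNReal.ofReal (c x a)
            + ENNReal.ofReal (w x) * ∫⁻ y, ENNReal.ofReal (v y - ⨅ z, v z) ∂(P x a)) := by
  intro x
  set m : ℝ := ⨅ z, v z with hm
  have hbdd : BddBelow (Set.range v) := ⟨0, by rintro y ⟨z, rfl⟩; exact hv0 z⟩
  have hm0 : 0 ≤ m := Real.iInf_nonneg hv0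
  have hmle : ∀ z, m ≤ v z := fun z => ciInf_le hbdd z
  have hwα : 0 < w x + α := add_pos (hw x) hα
  set W : ℝ≥0∞ := ENNReal.ofReal (w x + α) with hW
  have hW0 : W ≠ 0 := by simp [hW, ENNReal.ofReal_pos.2 hwα, pos_iff_ne_zero.mp]
  have hWt : W ≠ ∞ := ENNReal.ofReal_ne_top
  -- pointwise decomposition of ofReal (v y)
  have hpt : ∀ y, ENNReal.ofReal (v y) = ENNReal.ofReal (v y - m) + ENNReal.ofReal m := by
    intro y
    rw [← ENNReal.ofReal_add (sub_nonneg.2 (hmle y)) hm0, sub_add_cancel]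
  -- integral decomposition
  have hint : ∀ a ∈ As x, ∫⁻ y, ENNReal.ofReal (v y) ∂(P x a)
      = (∫⁻ y, ENNReal.ofReal (v y - m) ∂(P x a)) + ENNReal.ofReal m := by
    intro a ha
    have := hP x a ha
    calc ∫⁻ y, ENNReal.ofReal (v y) ∂(P x a)
        = ∫⁻ y, (ENNReal.ofReal (v y - m) + ENNReal.ofReal m) ∂(P x a) := by
          simp_rw [← hpt]
      _ = (∫⁻ y, ENNReal.ofReal (v y - m) ∂(P x a)) + ∫⁻ _, ENNReal.ofReal m ∂(P x a) :=
          lintegral_add_right _ measurable_const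
      _ = (∫⁻ y, ENNReal.ofReal (v y - m) ∂(P x a)) + ENNReal.ofReal m := by
          rw [lintegral_const, measure_univ, mul_one]
  haveI : Nonempty (As x) := (hAs x).to_subtype
  -- multiply the fixed point equation by W
  have key : ENNReal.ofReal ((w x + α) * v x)
      = ⨅ a : As x, (ENNReal.ofReal (c x a)
          + ENNReal.ofReal (w x) * (∫⁻ y, ENNReal.ofReal (v y - m) ∂(P x a))
          + ENNReal.ofReal (w x * m)) := by
    have h1 : ENNReal.ofReal ((w x + α) * v x) = W * ENNReal.ofReal (v x) := by
      rw [hW, ← ENNReal.ofReal_mul hwα.le]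
    rw [h1, hfix x, ← iInf_subtype'' (As x), ENNReal.mul_iInf_of_ne hW0 hWt]
    refine iInf_congr fun a => ?_
    have hmem := a.2
    rw [mul_add, add_comm α (w x)]
    have hc : W * (ENNReal.ofReal (c x a) / W) = ENNReal.ofReal (c x a) :=
      ENNReal.mul_div_cancel hW0 hWt
    have hwpart : W * (ENNReal.ofReal (w x) / W * ∫⁻ y, ENNReal.ofReal (v y) ∂(P x a))
        = ENNReal.ofReal (w x) * ∫⁻ y, ENNReal.ofReal (v y) ∂(P x a) := by
      rw [← mul_assoc, ENNReal.mul_div_cancel hW0 hWt]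
    rw [hc, hwpart, hint a hmem, mul_add, ← ENNReal.ofReal_mul (hw x).le, add_assoc]
  -- decompose the LHS
  have hlhs : ENNReal.ofReal ((w x + α) * (v x - m)) + ENNReal.ofReal (α * m)
        + ENNReal.ofReal (w x * m) = ENNReal.ofReal ((w x + α) * v x) := by
    have h1 : 0 ≤ (w x + α) * (v x - m) := mul_nonneg hwα.le (sub_nonneg.2 (hmle x))
    have h2 : 0 ≤ α * m := mul_nonneg hα.le hm0
    have h3 : 0 ≤ w x * m := mul_nonneg (hw x).le hm0
    rw [← ENNReal.ofReal_add h1 h2, ← ENNReal.ofReal_add (add_nonneg h1 h2) h3]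
    ring_nf
  -- conclude by cancellation
  have hfin : ENNReal.ofReal (w x * m) ≠ ∞ := ENNReal.ofReal_ne_top
  rw [← ENNReal.add_left_inj hfin, hlhs, key, ← iInf_subtype'' (As x), ENNReal.iInf_add]
end

section
/- Suppose that for every bounded continuous f : S → ℝ the map (x,a) ↦ ∫_S f dν(x,a) − q_x(a)·f(x) is continuous on K. Define P(x,a) := (1/w(x))·ν(x,a) + (1 − q_x(a)/w(x))·δ_x, where δ_x is the Dirac measure at x. Then each P(x,a) is a Borel probability measure on S, and for every bounded continuous f : S → ℝ the map (x,a) ↦ ∫_S f dP(x,a) is continuous on K; that is, the kernel P is weakly continuous on K. -/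
open Filter Topology MeasureTheory ENNReal

/-- Suppose that for every bounded continuous `f : S → ℝ` the map
`(x,a) ↦ ∫_S f dν(x,a) − q_x(a)·f(x)` (with `q_x(a) := ν(x,a)(S)`) is continuous on the
graph `K = {(x,a) : a ∈ A(x)}`.  Define
`P(x,a) := (1/w(x))·ν(x,a) + (1 − q_x(a)/w(x))·δ_x`.  Then each `P(x,a)`, `(x,a) ∈ K`,
is a Borel probability measure on `S`, and `P` is weakly continuous on `K`. -/
theorem stmt14 {S A : Type*} [MetricSpace S] [MetricSpace A]
    [MeasurableSpace S] [BorelSpace S]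
    (As : S → Set A)
    (ν : S × A → Measure S) (hνfin : ∀ p, IsFiniteMeasure (ν p))
    (hν0 : ∀ p : S × A, p.2 ∈ As p.1 → ν p {p.1} = 0)
    (w : S → ℝ) (hwc : Continuous w) (hw : ∀ x, 0 < w x)
    (hνw : ∀ p : S × A, p.2 ∈ As p.1 → ν p Set.univ ≤ ENNReal.ofReal (w p.1))
    (hcont : ∀ f : BoundedContinuousFunction S ℝ,
      ContinuousOn (fun p : S × A => (∫ y, f y ∂(ν p)) - (ν p Set.univ).toReal * f p.1)
        {p : S × A | p.2 ∈ As p.1}) :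
    (∀ p : S × A, p.2 ∈ As p.1 → IsProbabilityMeasure
        ((ENNReal.ofReal (w p.1))⁻¹ • ν p
          + (1 - ν p Set.univ / ENNReal.ofReal (w p.1)) • Measure.dirac p.1))
    ∧ ∀ f : BoundedContinuousFunction S ℝ,
        ContinuousOn (fun p : S × A =>
            ∫ y, f y ∂((ENNReal.ofReal (w p.1))⁻¹ • ν p
              + (1 - ν p Set.univ / ENNReal.ofReal (w p.1)) • Measure.dirac p.1))
          {p : S × A | p.2 ∈ As p.1} := by
  have hc0 : ∀ x : S, (ENNReal.ofReal (w x)) ≠ 0 := fun x => by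
    simp [ENNReal.ofReal_eq_zero, not_le, hw x]
  have hct : ∀ x : S, (ENNReal.ofReal (w x)) ≠ ⊤ := fun x => ENNReal.ofReal_ne_top
  have hqt : ∀ p : S × A, ν p Set.univ ≠ ⊤ := fun p => (hνfin p).measure_univ_lt_top.ne
  have hd1 : ∀ p : S × A, p.2 ∈ As p.1 →
      ν p Set.univ / ENNReal.ofReal (w p.1) ≤ 1 := by
    intro p hp
    rw [ENNReal.div_le_iff (hc0 p.1) (hct p.1), one_mul]
    exact hνw p hp
  -- the integral formula
  have hint : ∀ (f : BoundedContinuousFunction S ℝ) (p : S × A), p.2 ∈ As p.1 →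
      (∫ y, f y ∂((ENNReal.ofReal (w p.1))⁻¹ • ν p
          + (1 - ν p Set.univ / ENNReal.ofReal (w p.1)) • Measure.dirac p.1))
        = (w p.1)⁻¹ * ((∫ y, f y ∂(ν p)) - (ν p Set.univ).toReal * f p.1) + f p.1 := by
    intro f p hp
    haveI := hνfin p
    have h1 : Integrable f ((ENNReal.ofReal (w p.1))⁻¹ • ν p) :=
      (f.integrable (ν p)).smul_measure (by simp [ENNReal.inv_ne_top, hc0 p.1])
    have h2 : Integrable f ((1 - ν p Set.univ / ENNReal.ofReal (w p.1)) • Measure.dirac p.1) :=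
      (f.integrable (Measure.dirac p.1)).smul_measure
        (ne_top_of_le_ne_top one_ne_top (tsub_le_self))
    rw [integral_add_measure h1 h2, integral_smul_measure, integral_smul_measure,
      integral_dirac]
    have htR : ((ENNReal.ofReal (w p.1))⁻¹).toReal = (w p.1)⁻¹ := by
      rw [ENNReal.toReal_inv, ENNReal.toReal_ofReal (hw p.1).le]
    have hdR : (1 - ν p Set.univ / ENNReal.ofReal (w p.1)).toReal
        = 1 - (ν p Set.univ).toReal / w p.1 := by
      rw [ENNReal.toReal_sub_of_le (hd1 p hp) one_ne_top, ENNReal.toReal_div,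
        ENNReal.toReal_one, ENNReal.toReal_ofReal (hw p.1).le]
    rw [htR, hdR]
    have hwne : w p.1 ≠ 0 := (hw p.1).ne'
    field_simp
    have hinv : w p.1 * (w p.1)⁻¹ = 1 := mul_inv_cancel₀ hwne
    linear_combination (∫ x, f x ∂ν p - f p.1 * (ν p Set.univ).toReal + w p.1 * f p.1) * hinv
  constructor
  · intro p hp
    constructor
    rw [Measure.add_apply, Measure.smul_apply, Measure.smul_apply, Measure.dirac_apply' _
      MeasurableSet.univ]
    simp only [Set.indicator_of_mem (Set.mem_univ p.1), smul_eq_mul, mul_one, Pi.one_apply]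
    rw [← ENNReal.div_eq_inv_mul, add_comm,
      tsub_add_cancel_of_le (hd1 p hp)]
  · intro f
    have : ContinuousOn (fun p : S × A =>
        (w p.1)⁻¹ * ((∫ y, f y ∂(ν p)) - (ν p Set.univ).toReal * f p.1) + f p.1)
        {p : S × A | p.2 ∈ As p.1} := by
      apply ContinuousOn.add
      · exact ContinuousOn.mul
          ((hwc.comp continuous_fst).inv₀ (fun p => (hw p.1).ne')).continuousOn (hcont f)
      · exact (f.continuous.comp continuous_fst).continuousOn
    exact this.congr (fun p hp => hint f p hp)
end

section
/- Suppose g ∈ [0, +∞] and a Borel measurable h : S → [0, +∞] satisfy g + h(x)·q_x ≥ c(x) + ∫_S h(y) q(dy|x) for every x ∈ S. Then for every x ∈ S and every t ≥ 0: h(x) + g·t ≥ c(x)·t·e^{−q_x t} + ∫_0^t e^{−q_x s}·( q_x·c(x)·s + ∫_S ( h(y) + g·(t − s) ) q(dy|x) ) ds, where all integrals are Lebesgue integrals with values in [0, +∞] and the convention 0·(+∞) := 0 is in force. -/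
open Filter Topology MeasureTheory ENNReal

/-- If `g ∈ [0,+∞]` and a Borel measurable `h : S → [0,+∞]` satisfy
`g + h(x)·q_x ≥ c(x) + ∫_S h(y) q(dy|x)` for every `x ∈ S` (with `q_x := q(S|x)`), then
for every `x ∈ S` and `t ≥ 0`:
`h(x) + g·t ≥ c(x)·t·e^{−q_x t}
  + ∫_0^t e^{−q_x s} ( q_x·c(x)·s + ∫_S (h(y) + g·(t−s)) q(dy|x) ) ds`. -/
theorem stmt18 {S : Type*} [MetricSpace S] [MeasurableSpace S] [BorelSpace S]
    (c : S → ℝ) (hcm : Measurable c) (hc0 : ∀ x, 0 ≤ c x)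
    (q : S → Measure S) (hqfin : ∀ x, IsFiniteMeasure (q x))
    (hqdiag : ∀ x, q x {x} = 0)
    (hqmeas : ∀ Γ : Set S, MeasurableSet Γ → Measurable fun x => q x Γ)
    (g : ℝ≥0∞) (h : S → ℝ≥0∞) (hh : Measurable h)
    (hineq : ∀ x : S,
      ENNReal.ofReal (c x) + ∫⁻ y, h y ∂(q x) ≤ g + h x * q x Set.univ) :
    ∀ (x : S) (t : ℝ), 0 ≤ t →
      ENNReal.ofReal (c x * t * Real.exp (-(q x Set.univ).toReal * t))
        + ∫⁻ s in Set.Ioc (0 : ℝ) t,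
            ENNReal.ofReal (Real.exp (-(q x Set.univ).toReal * s))
              * (q x Set.univ * ENNReal.ofReal (c x * s)
                + ∫⁻ y, (h y + g * ENNReal.ofReal (t - s)) ∂(q x))
        ≤ h x + g * ENNReal.ofReal t := by
  intro x t ht
  rcases eq_or_lt_of_le ht with rfl | ht0
  · simp
  -- now 0 < t
  have hQtop : q x Set.univ ≠ ∞ := (hqfin x).measure_univ_lt_top.ne
  by_cases hgx : g = ∞
  · have : g * ENNReal.ofReal t = ∞ := by
      rw [hgx, ENNReal.top_mul]
      simp [ENNReal.ofReal_eq_zero, not_le.mpr ht0]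
    rw [this, add_top]
    exact le_top
  by_cases hhx : h x = ∞
  · rw [hhx, top_add]
    exact le_top
  have hIle := hineq x
  have hRfin : g + h x * q x Set.univ ≠ ∞ := by
    simp [ENNReal.add_eq_top, ENNReal.mul_eq_top, hgx, hhx, hQtop]
  have hItop : (∫⁻ y, h y ∂ q x) ≠ ∞ :=
    ne_top_of_le_ne_top hRfin (le_trans le_add_self hIle)
  set Qr : ℝ := (q x Set.univ).toReal with hQr_def
  set C : ℝ := c x with hC_def
  set H : ℝ := (h x).toReal with hH_def
  set gr : ℝ := g.toReal with hgr_def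
  set Ir : ℝ := (∫⁻ y, h y ∂ q x).toReal with hIr_def
  have hQr : 0 ≤ Qr := ENNReal.toReal_nonneg
  have hC : 0 ≤ C := hc0 x
  have hH : 0 ≤ H := ENNReal.toReal_nonneg
  have hgr : 0 ≤ gr := ENNReal.toReal_nonneg
  have hIr : 0 ≤ Ir := ENNReal.toReal_nonneg
  have hkey : C + Ir ≤ gr + H * Qr := by
    have h1 := ENNReal.toReal_mono hRfin hIle
    rwa [ENNReal.toReal_add (by simp) hItop, ENNReal.toReal_add hgx
        (ENNReal.mul_ne_top hhx hQtop), ENNReal.toReal_mul,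
        ENNReal.toReal_ofReal hC] at h1
  set f : ℝ → ℝ := fun s => Real.exp (-Qr * s) * (Qr * (C * s) + (Ir + gr * (t - s) * Qr))
    with hf_def
  set G : ℝ → ℝ := fun s => H + gr * t - (H + gr * (t - s) + C * s) * Real.exp (-Qr * s)
    with hG_def
  set G' : ℝ → ℝ := fun s =>
      (gr - C) * Real.exp (-Qr * s) + (H + gr * (t - s) + C * s) * (Qr * Real.exp (-Qr * s))
    with hG'_def
  have hfc : Continuous f := by fun_prop
  have hG'c : Continuous G' := by fun_prop
  have hderiv : ∀ s : ℝ, HasDerivAt G (G' s) s := by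
    intro s
    have hu : HasDerivAt (fun s => H + gr * (t - s) + C * s) (C - gr) s := by
      have : HasDerivAt (fun s : ℝ => H + gr * (t - s) + C * s)
          (0 + gr * (0 - 1) + C * 1) s :=
        ((hasDerivAt_const s H).add (((hasDerivAt_const s t).sub (hasDerivAt_id s)).const_mul gr)).add
          ((hasDerivAt_id s).const_mul C)
      convert this using 1; ring
    have hv : HasDerivAt (fun s : ℝ => Real.exp (-Qr * s)) (Real.exp (-Qr * s) * (-Qr * 1)) s :=
      ((hasDerivAt_id s).const_mul (-Qr)).exp
    have := (hasDerivAt_const s (H + gr * t)).sub (hu.mul hv)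
    refine this.congr_deriv ?_
    simp only [hG'_def]
    ring
  have hfG' : ∀ s ∈ Set.Icc (0:ℝ) t, f s ≤ G' s := by
    intro s hs
    have h1 : Qr * (C * s) + (Ir + gr * (t - s) * Qr)
        ≤ (gr - C) + (H + gr * (t - s) + C * s) * Qr := by nlinarith [hkey]
    have h2 := mul_le_mul_of_nonneg_left h1 (Real.exp_pos (-Qr * s)).le
    simp only [hf_def, hG'_def]
    nlinarith [h2]
  have hfnonneg : ∀ s ∈ Set.Ioc (0:ℝ) t, 0 ≤ f s := by
    intro s hs
    have hs0 : 0 ≤ s := hs.1.le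
    have hst : 0 ≤ t - s := sub_nonneg.mpr hs.2
    have : 0 ≤ Qr * (C * s) + (Ir + gr * (t - s) * Qr) := by positivity
    exact mul_nonneg (Real.exp_pos _).le this
  have hintnonneg : 0 ≤ ∫ s in Set.Ioc (0:ℝ) t, f s :=
    setIntegral_nonneg measurableSet_Ioc hfnonneg
  have hmono : ∫ s in (0:ℝ)..t, f s ≤ ∫ s in (0:ℝ)..t, G' s :=
    intervalIntegral.integral_mono_on ht (hfc.intervalIntegrable _ _)
      (hG'c.intervalIntegrable _ _) hfG'
  have hftc : ∫ s in (0:ℝ)..t, G' s = G t - G 0 :=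
    intervalIntegral.integral_eq_sub_of_hasDerivAt (fun s _ => hderiv s)
      (hG'c.intervalIntegrable _ _)
  have hG0 : G 0 = 0 := by simp [hG_def]
  have hGt : G t = H + gr * t - (H + C * t) * Real.exp (-Qr * t) := by
    simp only [hG_def]; ring_nf
  have hreal : C * t * Real.exp (-Qr * t) + ∫ s in Set.Ioc (0:ℝ) t, f s ≤ H + gr * t := by
    rw [← intervalIntegral.integral_of_le ht]
    nlinarith [hmono, hftc, hG0, hGt, mul_nonneg hH (Real.exp_pos (-Qr * t)).le]
  -- pass to ENNReal
  have hlin : ∀ s : ℝ, (∫⁻ y, (h y + g * ENNReal.ofReal (t - s)) ∂ q x)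
      = (∫⁻ y, h y ∂ q x) + g * ENNReal.ofReal (t - s) * q x Set.univ := by
    intro s
    rw [lintegral_add_left hh, lintegral_const]
  have hcong : (∫⁻ s in Set.Ioc (0:ℝ) t,
        ENNReal.ofReal (Real.exp (-Qr * s))
          * (q x Set.univ * ENNReal.ofReal (C * s)
            + ∫⁻ y, (h y + g * ENNReal.ofReal (t - s)) ∂ q x))
      = ∫⁻ s in Set.Ioc (0:ℝ) t, ENNReal.ofReal (f s) := by
    refine setLIntegral_congr_fun measurableSet_Ioc (fun s hs => ?_)
    have hs0 : 0 ≤ s := hs.1.le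
    have hst : 0 ≤ t - s := sub_nonneg.mpr hs.2
    rw [hlin s,
      show q x Set.univ = ENNReal.ofReal Qr from (ENNReal.ofReal_toReal hQtop).symm,
      show g = ENNReal.ofReal gr from (ENNReal.ofReal_toReal hgx).symm,
      show (∫⁻ y, h y ∂ q x) = ENNReal.ofReal Ir from (ENNReal.ofReal_toReal hItop).symm]
    rw [hf_def]
    rw [ENNReal.ofReal_mul (Real.exp_pos _).le,
      ENNReal.ofReal_add (by positivity) (by positivity),
      ENNReal.ofReal_mul hQr,
      ENNReal.ofReal_add hIr (by positivity),
      ENNReal.ofReal_mul (mul_nonneg hgr hst),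
      ENNReal.ofReal_mul hgr]
  have hof : (∫⁻ s in Set.Ioc (0:ℝ) t, ENNReal.ofReal (f s))
      = ENNReal.ofReal (∫ s in Set.Ioc (0:ℝ) t, f s) := by
    rw [← ofReal_integral_eq_lintegral_ofReal (hfc.integrableOn_Ioc)]
    filter_upwards [ae_restrict_mem measurableSet_Ioc] with s hs
    exact hfnonneg s hs
  have hRHS : h x + g * ENNReal.ofReal t = ENNReal.ofReal (H + gr * t) := by
    rw [ENNReal.ofReal_add hH (mul_nonneg hgr ht), ENNReal.ofReal_mul hgr,
      ENNReal.ofReal_toReal hhx, ENNReal.ofReal_toReal hgx]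
  rw [hcong, hof, hRHS,
    ← ENNReal.ofReal_add (by positivity) hintnonneg]
  exact ENNReal.ofReal_le_ofReal hreal
end
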